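/- arXiv:1905.10209 — 5 statements merged into one kernel-verified Lean document; each statement's English description precedes it below -/
import Mathlib

section
/- Let A and B be disjoint measurable subsets of ℝ^d with positive probability, C = A ∪ B, and suppose the conditional covariance matrices V_P(A), V_P(B), V_P(C) are positive definite. Then (P(A)/P(C))·ln det V_P(A) + (P(B)/P(C))·ln det V_P(B) ≤ ln det V_P(C). -/
open MeasureTheory Matrix

/-- Conditional mean of the identity `X ~ P` given `X ∈ S`. -/
noncomputable def condMean {d : ℕ} (P : Measure (Fin d → ℝ)) (S : Set (Fin d → ℝ)) :
    Fin d → ℝ :=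
  ((P S).toReal)⁻¹ • ∫ x in S, x ∂P

/-- Conditional covariance matrix `V_P(S)`, entrywise. -/
noncomputable def condCov {d : ℕ} (P : Measure (Fin d → ℝ)) (S : Set (Fin d → ℝ)) :
    Matrix (Fin d) (Fin d) ℝ :=
  Matrix.of fun i j =>
    ((P S).toReal)⁻¹ * ∫ x in S, (x i - condMean P S i) * (x j - condMean P S j) ∂P

open Matrix
open scoped MatrixOrder
variable {n : Type*} [Fintype n] [DecidableEq n]

lemma detA {W : Matrix n n ℝ} (hW : W.IsHermitian) (s t : ℝ) :
    (s • (1 : Matrix n n ℝ) + t • W).det = ∏ i, (s + t * hW.eigenvalues i) := by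
  set U : Matrix n n ℝ := (hW.eigenvectorUnitary : Matrix n n ℝ) with hU
  have hUU : U * star U = 1 := Matrix.mem_unitaryGroup_iff.mp hW.eigenvectorUnitary.2
  have hsp : W = U * Matrix.diagonal (RCLike.ofReal ∘ hW.eigenvalues) * star U :=
    hW.spectral_theorem
  have key : s • (1 : Matrix n n ℝ) + t • W
      = U * (Matrix.diagonal fun i => s + t * hW.eigenvalues i) * star U := by
    have h2 : (Matrix.diagonal fun i => s + t * hW.eigenvalues i)
        = s • (1 : Matrix n n ℝ) + t • Matrix.diagonal (RCLike.ofReal ∘ hW.eigenvalues) := by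
      ext i j
      by_cases h : i = j <;> simp [h, Matrix.diagonal, Matrix.one_apply]
    rw [h2]
    simp only [Matrix.mul_add, Matrix.add_mul, Matrix.mul_smul, Matrix.smul_mul, mul_one,
      Matrix.mul_one, hUU, ← Matrix.mul_assoc, ← hsp]
  rw [key, Matrix.det_mul, Matrix.det_mul, Matrix.det_diagonal]
  have h1 : U.det * (star U).det = 1 := by
    rw [← Matrix.det_mul, hUU, Matrix.det_one]
  calc U.det * (∏ i, (s + t * hW.eigenvalues i)) * (star U).det
      = (U.det * (star U).det) * ∏ i, (s + t * hW.eigenvalues i) := by ring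
    _ = ∏ i, (s + t * hW.eigenvalues i) := by rw [h1, one_mul]

lemma posDef_conj {A B : Matrix n n ℝ} (hA : A.PosDef) (hB : IsUnit B.det) :
    (Bᴴ * A * B).PosDef := by
  refine Matrix.PosDef.of_dotProduct_mulVec_pos (Matrix.isHermitian_conjTranspose_mul_mul B hA.1) fun x hx => ?_
  have hBx : B *ᵥ x ≠ 0 := fun h => hx <| by
    have hinj := Matrix.mulVec_injective_iff_isUnit.2 (Matrix.isUnit_iff_isUnit_det B |>.2 hB)
    exact hinj (by simpa using h)
  simpa only [star_mulVec, dotProduct_mulVec, vecMul_vecMul] using hA.dotProduct_mulVec_pos hBx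

section sqrtfacts
variable {M : Matrix n n ℝ} (hM : M.PosDef)
include hM

lemma sqrt_det_isUnit : IsUnit (CFC.sqrt M).det := by
  have h2 : (CFC.sqrt M).det * (CFC.sqrt M).det = M.det := by
    rw [← Matrix.det_mul, CFC.sqrt_mul_sqrt_self M hM.posSemidef.nonneg]
  refine isUnit_iff_ne_zero.2 fun h => ?_
  rw [h, zero_mul] at h2
  exact hM.det_pos.ne' h2.symm

lemma sqrt_inv_herm : ((CFC.sqrt M)⁻¹)ᴴ = (CFC.sqrt M)⁻¹ := by
  rw [Matrix.conjTranspose_nonsing_inv, (CFC.sqrt_nonneg M).posSemidef.1]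

end sqrtfacts

lemma det_mono {M N : Matrix n n ℝ} (hM : M.PosDef) (h : (N - M).PosSemidef) :
    M.det ≤ N.det := by
  set S := CFC.sqrt M with hSdef
  have hSS : S * S = M := CFC.sqrt_mul_sqrt_self M hM.posSemidef.nonneg
  have hU : IsUnit S.det := sqrt_det_isUnit hM
  have hSi : S * S⁻¹ = 1 := Matrix.mul_nonsing_inv S hU
  have hiS : S⁻¹ * S = 1 := Matrix.nonsing_inv_mul S hU
  set K := S⁻¹ * (N - M) * S⁻¹ with hK
  have hKps : K.PosSemidef := by
    have := h.conjTranspose_mul_mul_same S⁻¹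
    rwa [sqrt_inv_herm hM] at this
  have hN : N = S * (1 + K) * S := by
    rw [hK, Matrix.mul_add, Matrix.add_mul, Matrix.mul_one, hSS]
    rw [show S * (S⁻¹ * (N - M) * S⁻¹) * S = (S * S⁻¹) * (N - M) * (S⁻¹ * S) by
      simp only [Matrix.mul_assoc]]
    rw [hSi, hiS, Matrix.one_mul, Matrix.mul_one]
    abel
  have hdet1K : (1 : ℝ) ≤ (1 + K).det := by
    have e : ((1:ℝ) • (1 : Matrix n n ℝ) + (1:ℝ) • K).det
        = ∏ i, ((1:ℝ) + 1 * hKps.1.eigenvalues i) := detA hKps.1 1 1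
    simp only [one_smul, one_mul] at e
    rw [e]
    calc (1:ℝ) = ∏ _i : n, (1:ℝ) := by simp
      _ ≤ ∏ i, (1 + hKps.1.eigenvalues i) :=
        Finset.prod_le_prod (fun i _ => zero_le_one)
          (fun i _ => by linarith [hKps.eigenvalues_nonneg i])
  have hNdet : N.det = M.det * (1 + K).det := by
    rw [hN, Matrix.det_mul, Matrix.det_mul,
      show S.det * (1 + K).det * S.det = (S.det * S.det) * (1 + K).det by ring,
      ← Matrix.det_mul, hSS]
  rw [hNdet]
  nlinarith [hM.det_pos]

lemma log_key {M N V : Matrix n n ℝ} (hM : M.PosDef) (hN : N.PosDef) (hV : V.PosDef)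
    {s t : ℝ} (hs : 0 < s) (ht : 0 < t) (hst : s + t = 1)
    (h : (V - (s • M + t • N)).PosSemidef) :
    s * Real.log M.det + t * Real.log N.det ≤ Real.log V.det := by
  have hsM : (s • M).PosDef := Matrix.PosDef.of_dotProduct_mulVec_pos (show (s • M)ᴴ = s • M by
      rw [Matrix.conjTranspose_smul, star_trivial, hM.1.eq]) fun x hx => by
    rw [Matrix.smul_mulVec, dotProduct_smul, smul_eq_mul]
    exact mul_pos hs (hM.dotProduct_mulVec_pos hx)
  have htN : (t • N).PosDef := Matrix.PosDef.of_dotProduct_mulVec_pos (show (t • N)ᴴ = t • N by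
      rw [Matrix.conjTranspose_smul, star_trivial, hN.1.eq]) fun x hx => by
    rw [Matrix.smul_mulVec, dotProduct_smul, smul_eq_mul]
    exact mul_pos ht (hN.dotProduct_mulVec_pos hx)
  have hD : (s • M + t • N).PosDef := hsM.add htN
  have hdetDV : (s • M + t • N).det ≤ V.det := det_mono hD h
  -- concavity part
  set S := CFC.sqrt M with hSdef
  have hSS : S * S = M := CFC.sqrt_mul_sqrt_self M hM.posSemidef.nonneg
  have hU : IsUnit S.det := sqrt_det_isUnit hM
  have hSi : S * S⁻¹ = 1 := Matrix.mul_nonsing_inv S hU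
  have hiS : S⁻¹ * S = 1 := Matrix.nonsing_inv_mul S hU
  have hUi : IsUnit (S⁻¹).det := S.isUnit_nonsing_inv_det hU
  set W := S⁻¹ * N * S⁻¹ with hW
  have hWpd : W.PosDef := by
    have := posDef_conj hN hUi
    rwa [sqrt_inv_herm hM] at this
  have hDW : s • M + t • N = S * (s • (1 : Matrix n n ℝ) + t • W) * S := by
    rw [hW, Matrix.mul_add, Matrix.add_mul, Matrix.mul_smul, Matrix.mul_smul,
      Matrix.smul_mul, Matrix.smul_mul, Matrix.mul_one, hSS]
    congr 1
    rw [show S * (S⁻¹ * N * S⁻¹) * S = (S * S⁻¹) * N * (S⁻¹ * S) by simp only [Matrix.mul_assoc],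
      hSi, hiS, Matrix.one_mul, Matrix.mul_one]
  have hNW : N = S * W * S := by
    rw [hW, show S * (S⁻¹ * N * S⁻¹) * S = (S * S⁻¹) * N * (S⁻¹ * S) by simp only [Matrix.mul_assoc],
      hSi, hiS, Matrix.one_mul, Matrix.mul_one]
  have hdetSS : S.det * S.det = M.det := by rw [← Matrix.det_mul, hSS]
  have hNdet : N.det = M.det * W.det := by
    rw [hNW, Matrix.det_mul, Matrix.det_mul,
      show S.det * W.det * S.det = (S.det * S.det) * W.det by ring, hdetSS]
  have hDdet : (s • M + t • N).det = M.det * ∏ i, (s + t * hWpd.1.eigenvalues i) := by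
    rw [hDW, Matrix.det_mul, Matrix.det_mul, detA hWpd.1 s t, ← hdetSS]
    ring
  have hlampos : ∀ i, 0 < hWpd.1.eigenvalues i := hWpd.eigenvalues_pos
  have hWdet : W.det = ∏ i, hWpd.1.eigenvalues i := by
    exact_mod_cast hWpd.1.det_eq_prod_eigenvalues
  -- log computations
  have hlogN : Real.log N.det = Real.log M.det + ∑ i, Real.log (hWpd.1.eigenvalues i) := by
    rw [hNdet, Real.log_mul hM.det_pos.ne' hWpd.det_pos.ne', hWdet,
      Real.log_prod (fun i _ => (hlampos i).ne')]
  have hlogD : Real.log (s • M + t • N).det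
      = Real.log M.det + ∑ i, Real.log (s + t * hWpd.1.eigenvalues i) := by
    have hpos : ∀ i, 0 < s + t * hWpd.1.eigenvalues i :=
      fun i => by have := hlampos i; positivity
    rw [hDdet, Real.log_mul hM.det_pos.ne' (Finset.prod_pos fun i _ => hpos i).ne',
      Real.log_prod (fun i _ => (hpos i).ne')]
  have hterm : ∀ i, t * Real.log (hWpd.1.eigenvalues i)
      ≤ Real.log (s + t * hWpd.1.eigenvalues i) := by
    intro i
    set lam := hWpd.1.eigenvalues i with hlam
    have hl : 0 < lam := hlampos i
    have hgm : (1:ℝ) ^ s * lam ^ t ≤ s * 1 + t * lam :=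
      Real.geom_mean_le_arith_mean2_weighted hs.le ht.le zero_le_one hl.le hst
    rw [Real.one_rpow, one_mul, mul_one] at hgm
    calc t * Real.log lam = Real.log (lam ^ t) := (Real.log_rpow hl t).symm
      _ ≤ Real.log (s + t * lam) := Real.log_le_log (Real.rpow_pos_of_pos hl t) hgm
  have step : s * Real.log M.det + t * Real.log N.det ≤ Real.log (s • M + t • N).det := by
    rw [hlogN, hlogD, mul_add]
    have : t * ∑ i, Real.log (hWpd.1.eigenvalues i)
        ≤ ∑ i, Real.log (s + t * hWpd.1.eigenvalues i) := by
      rw [Finset.mul_sum]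
      exact Finset.sum_le_sum fun i _ => hterm i
    have hmm : s * Real.log M.det + t * Real.log M.det = Real.log M.det := by
      rw [← add_mul, hst, one_mul]
    linarith
  exact step.trans (Real.log_le_log hD.det_pos hdetDV)


lemma sq_int {α : Type*} [MeasurableSpace α] {μ : Measure α} [IsFiniteMeasure μ]
    {f : α → ℝ} (hf : Integrable f μ) (hf2 : Integrable (fun x => (f x)^2) μ) (q : ℝ) :
    Integrable (fun x => (f x - q)^2) μ := by
  have h : (fun x => (f x - q)^2) = fun x => ((f x)^2 - (2*q) * f x) + q^2 := by
    funext x; ring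
  rw [h]
  exact (hf2.sub (hf.const_mul _)).add (integrable_const _)

lemma varmin {α : Type*} [MeasurableSpace α] {μ : Measure α} [IsFiniteMeasure μ]
    {f : α → ℝ} (hf : Integrable f μ) (hf2 : Integrable (fun x => (f x)^2) μ)
    (hmass : ((μ Set.univ).toReal) ≠ 0) (r : ℝ) :
    ∫ x, (f x - ((μ Set.univ).toReal)⁻¹ * ∫ y, f y ∂μ)^2 ∂μ ≤ ∫ x, (f x - r)^2 ∂μ := by
  set mass := (μ Set.univ).toReal with hmassdef
  set m := mass⁻¹ * ∫ y, f y ∂μ with hm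
  have hfm : Integrable (fun x => f x - m) μ := hf.sub (integrable_const m)
  have hintfm : ∫ x, (f x - m) ∂μ = 0 := by
    rw [integral_sub hf (integrable_const m), integral_const, smul_eq_mul, hm,
      ← mul_assoc, show μ.real Set.univ = mass from rfl, mul_inv_cancel₀ hmass, one_mul, sub_self]
  have hexp : (fun x => (f x - r)^2)
      = fun x => ((f x - m)^2 + (2*(m - r)) * (f x - m)) + (m - r)^2 := by
    funext x; ring
  have h1 : Integrable (fun x => (f x - m)^2) μ := sq_int hf hf2 m
  have h2 : Integrable (fun x => (2*(m - r)) * (f x - m)) μ := hfm.const_mul _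
  have e1 : ∫ x, (((f x - m)^2 + (2*(m - r)) * (f x - m)) + (m - r)^2) ∂μ
      = (∫ x, ((f x - m)^2 + (2*(m - r)) * (f x - m)) ∂μ) + ∫ _x, (m - r)^2 ∂μ :=
    integral_add (h1.add h2) (integrable_const _)
  have e2 : ∫ x, ((f x - m)^2 + (2*(m - r)) * (f x - m)) ∂μ
      = (∫ x, (f x - m)^2 ∂μ) + ∫ x, (2*(m - r)) * (f x - m) ∂μ := integral_add h1 h2
  rw [hexp, e1, e2, integral_const_mul, hintfm, integral_const, smul_eq_mul]
  have : 0 ≤ μ.real Set.univ * (m - r)^2 := by positivity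
  linarith

section prob
variable {d : ℕ}


variable (P : Measure (Fin d → ℝ)) [IsProbabilityMeasure P]
variable (hint1 : Integrable (fun x : Fin d → ℝ => x) P)
variable (hint2 : Integrable (fun x : Fin d → ℝ => ‖x‖ ^ 2) P)

include hint1 hint2

-- component integrability
lemma int_xi (i : Fin d) : Integrable (fun x : Fin d → ℝ => x i) P :=
  (ContinuousLinearMap.proj (R := ℝ) (φ := fun _ : Fin d => ℝ) i).integrable_comp hint1

lemma int_xij (i j : Fin d) : Integrable (fun x : Fin d → ℝ => x i * x j) P := by
  refine hint2.mono' (((measurable_pi_apply i).mul (measurable_pi_apply j)).aestronglyMeasurable) ?_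
  filter_upwards with x
  have hi : |x i| ≤ ‖x‖ := by
    simpa using norm_le_pi_norm x i
  have hj : |x j| ≤ ‖x‖ := by
    simpa using norm_le_pi_norm x j
  have : |x i * x j| ≤ ‖x‖ * ‖x‖ := by
    rw [abs_mul]
    exact mul_le_mul hi hj (abs_nonneg _) (norm_nonneg _)
  simpa [abs_mul, sq] using this

lemma int_prod (i j : Fin d) (p q : ℝ) :
    Integrable (fun x : Fin d → ℝ => (x i - p) * (x j - q)) P := by
  have h : (fun x : Fin d → ℝ => (x i - p) * (x j - q))
      = fun x => ((x i * x j - q * x i) - p * x j) + p * q := by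
    funext x; ring
  rw [h]
  exact (((int_xij P hint1 hint2 i j).sub ((int_xi P hint1 hint2 i).const_mul q)).sub
    ((int_xi P hint1 hint2 j).const_mul p)).add (integrable_const _)

lemma int_f (v : Fin d → ℝ) : Integrable (fun x : Fin d → ℝ => ∑ i, v i * x i) P :=
  integrable_finset_sum _ fun i _ => (int_xi P hint1 hint2 i).const_mul (v i)

lemma int_fsq (v : Fin d → ℝ) :
    Integrable (fun x : Fin d → ℝ => (∑ i, v i * x i)^2) P := by
  have h : (fun x : Fin d → ℝ => (∑ i, v i * x i)^2)
      = fun x => ∑ i, ∑ j, (v i * v j) * (x i * x j) := by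
    funext x
    rw [sq, Finset.sum_mul_sum]
    refine Finset.sum_congr rfl fun i _ => Finset.sum_congr rfl fun j _ => by ring
  rw [h]
  exact integrable_finset_sum _ fun i _ =>
    integrable_finset_sum _ fun j _ => (int_xij P hint1 hint2 i j).const_mul _

-- conditional mean components
lemma condMean_apply {S : Set (Fin d → ℝ)} (i : Fin d) :
    condMean P S i = ((P S).toReal)⁻¹ * ∫ x in S, x i ∂P := by
  have h : (∫ x in S, x ∂P) i
      = ∫ x in S, x i ∂P := by
    have := (ContinuousLinearMap.proj (R := ℝ) (φ := fun _ : Fin d => ℝ) i).integral_comp_comm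
      (hint1.restrict (s := S))
    simpa using this.symm
  simp [condMean, h]

end prob

section prob2
variable {d : ℕ}
variable (P : Measure (Fin d → ℝ)) [IsProbabilityMeasure P]
variable (hint1 : Integrable (fun x : Fin d → ℝ => x) P)
variable (hint2 : Integrable (fun x : Fin d → ℝ => ‖x‖ ^ 2) P)

include hint1 hint2

lemma quad_eq (v : Fin d → ℝ) (S : Set (Fin d → ℝ)) :
    v ⬝ᵥ (condCov P S *ᵥ v)
      = ((P S).toReal)⁻¹ *
        ∫ x in S, ((∑ i, v i * x i) - ∑ i, v i * condMean P S i)^2 ∂P := by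
  set μ := condMean P S with hμ
  have hI : ∀ i j : Fin d,
      Integrable (fun x : Fin d → ℝ => (x i - μ i) * (x j - μ j)) (P.restrict S) :=
    fun i j => (int_prod P hint1 hint2 i j _ _).restrict
  have hptwise : ∀ x : Fin d → ℝ, ((∑ i, v i * x i) - ∑ i, v i * μ i)^2
      = ∑ i, ∑ j, (v i * v j) * ((x i - μ i) * (x j - μ j)) := by
    intro x
    rw [← Finset.sum_sub_distrib]
    rw [sq, Finset.sum_mul_sum]
    exact Finset.sum_congr rfl fun i _ => Finset.sum_congr rfl fun j _ => by ring
  have hRint : (∫ x in S, ((∑ i, v i * x i) - ∑ i, v i * μ i)^2 ∂P)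
      = ∑ i, ∑ j, (v i * v j) * ∫ x in S, (x i - μ i) * (x j - μ j) ∂P := by
    simp_rw [hptwise]
    rw [integral_finset_sum _ (fun i _ =>
      integrable_finset_sum _ fun j _ => (hI i j).const_mul _)]
    refine Finset.sum_congr rfl fun i _ => ?_
    rw [integral_finset_sum _ (fun j _ => (hI i j).const_mul _)]
    exact Finset.sum_congr rfl fun j _ => integral_const_mul _ _
  have hL : v ⬝ᵥ (condCov P S *ᵥ v)
      = ∑ i, ∑ j, (v i * v j) *
          (((P S).toReal)⁻¹ * ∫ x in S, (x i - μ i) * (x j - μ j) ∂P) := by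
    simp only [dotProduct, mulVec, condCov, Matrix.of_apply, ← hμ]
    refine Finset.sum_congr rfl fun i _ => ?_
    rw [Finset.mul_sum]
    exact Finset.sum_congr rfl fun j _ => by ring
  rw [hL, hRint, Finset.mul_sum]
  refine Finset.sum_congr rfl fun i _ => ?_
  rw [Finset.mul_sum]
  exact Finset.sum_congr rfl fun j _ => by ring

lemma condMean_dot (v : Fin d → ℝ) (S : Set (Fin d → ℝ)) :
    ∑ i, v i * condMean P S i = ((P S).toReal)⁻¹ * ∫ x in S, (∑ i, v i * x i) ∂P := by
  rw [integral_finset_sum _ (fun i _ =>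
    ((int_xi P hint1 hint2 i).restrict (s := S)).const_mul (v i)), Finset.mul_sum]
  refine Finset.sum_congr rfl fun i _ => ?_
  rw [condMean_apply P hint1 hint2, integral_const_mul]
  ring

end prob2

lemma condCov_herm {d : ℕ} (P : Measure (Fin d → ℝ)) (S : Set (Fin d → ℝ)) :
    (condCov P S).IsHermitian := by
  refine Matrix.IsHermitian.ext fun i j => ?_
  simp only [condCov, Matrix.of_apply, star_trivial]
  congr 1
  exact integral_congr_ae (Filter.Eventually.of_forall fun x => mul_comm _ _)

theorem logDet_condCov_merge {d : ℕ}
    (P : Measure (Fin d → ℝ)) [IsProbabilityMeasure P]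
    (A B : Set (Fin d → ℝ)) (hA : MeasurableSet A) (hB : MeasurableSet B)
    (hAB : Disjoint A B) (hPA : 0 < P A) (hPB : 0 < P B)
    (hint1 : Integrable (fun x : Fin d → ℝ => x) P)
    (hint2 : Integrable (fun x : Fin d → ℝ => ‖x‖ ^ 2) P)
    (hVA : (condCov P A).PosDef) (hVB : (condCov P B).PosDef)
    (hVC : (condCov P (A ∪ B)).PosDef) :
    ((P A).toReal / (P (A ∪ B)).toReal) * Real.log (condCov P A).det
      + ((P B).toReal / (P (A ∪ B)).toReal) * Real.log (condCov P B).det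
      ≤ Real.log (condCov P (A ∪ B)).det := by
  set C := A ∪ B with hC
  set a := (P A).toReal with ha
  set b := (P B).toReal with hb
  have hapos : 0 < a := ENNReal.toReal_pos hPA.ne' (measure_ne_top P A)
  have hbpos : 0 < b := ENNReal.toReal_pos hPB.ne' (measure_ne_top P B)
  have hPC : P C = P A + P B := measure_union hAB hB
  have hcab : (P C).toReal = a + b := by
    rw [hPC, ENNReal.toReal_add (measure_ne_top P A) (measure_ne_top P B)]
  have hcpos : 0 < (P C).toReal := by rw [hcab]; linarith
  set c := (P C).toReal with hcdef
  set s := a / c with hs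
  set t := b / c with ht
  have hspos : 0 < s := div_pos hapos hcpos
  have htpos : 0 < t := div_pos hbpos hcpos
  have hst : s + t = 1 := by
    rw [hs, ht, ← add_div, hcab]
    exact div_self (by linarith)
  -- PSD of the Löwner difference
  have hpsd : (condCov P C - (s • condCov P A + t • condCov P B)).PosSemidef := by
    refine Matrix.PosSemidef.of_dotProduct_mulVec_nonneg ?_ ?_
    · refine ((condCov_herm P C).sub (Matrix.IsHermitian.add ?_ ?_))
      · show (s • condCov P A)ᴴ = s • condCov P A
        rw [Matrix.conjTranspose_smul, star_trivial, (condCov_herm P A).eq]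
      · show (t • condCov P B)ᴴ = t • condCov P B
        rw [Matrix.conjTranspose_smul, star_trivial, (condCov_herm P B).eq]
    · intro v
      rw [star_trivial]
      rw [Matrix.sub_mulVec, dotProduct_sub, Matrix.add_mulVec, dotProduct_add,
        Matrix.smul_mulVec, Matrix.smul_mulVec, dotProduct_smul,
        dotProduct_smul, smul_eq_mul, smul_eq_mul, sub_nonneg]
      -- quadratic forms
      set f := fun x : Fin d → ℝ => ∑ i, v i * x i with hf
      have hfP : Integrable f P := int_f P hint1 hint2 v
      have hf2P : Integrable (fun x => (f x)^2) P := int_fsq P hint1 hint2 v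
      have hqA := quad_eq P hint1 hint2 v A
      have hqB := quad_eq P hint1 hint2 v B
      have hqC := quad_eq P hint1 hint2 v C
      have hmA := condMean_dot P hint1 hint2 v A
      have hmB := condMean_dot P hint1 hint2 v B
      have hmC := condMean_dot P hint1 hint2 v C
      set mC := ∑ i, v i * condMean P C i with hmCdef
      -- per-set variance bounds
      have hvarA : ∫ x in A, (f x - ∑ i, v i * condMean P A i)^2 ∂P
          ≤ ∫ x in A, (f x - mC)^2 ∂P := by
        rw [hmA]
        have := varmin (μ := P.restrict A) (hfP.restrict) (hf2P.restrict)
          (by rw [Measure.restrict_apply_univ]; exact hapos.ne') mC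
        rwa [Measure.restrict_apply_univ] at this
      have hvarB : ∫ x in B, (f x - ∑ i, v i * condMean P B i)^2 ∂P
          ≤ ∫ x in B, (f x - mC)^2 ∂P := by
        rw [hmB]
        have := varmin (μ := P.restrict B) (hfP.restrict) (hf2P.restrict)
          (by rw [Measure.restrict_apply_univ]; exact hbpos.ne') mC
        rwa [Measure.restrict_apply_univ] at this
      -- split the union integral
      have hsplit : ∫ x in C, (f x - mC)^2 ∂P
          = (∫ x in A, (f x - mC)^2 ∂P) + ∫ x in B, (f x - mC)^2 ∂P :=
        setIntegral_union hAB hB (sq_int (hfP.restrict) (hf2P.restrict) mC)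
          (sq_int (hfP.restrict) (hf2P.restrict) mC)
      -- nonnegativity of set integrals
      have hnnA : 0 ≤ ∫ x in A, (f x - ∑ i, v i * condMean P A i)^2 ∂P :=
        integral_nonneg fun x => sq_nonneg _
      have hnnB : 0 ≤ ∫ x in B, (f x - ∑ i, v i * condMean P B i)^2 ∂P :=
        integral_nonneg fun x => sq_nonneg _
      rw [hqA, hqB, hqC, hsplit]
      rw [show s * (a⁻¹ * ∫ x in A, (f x - ∑ i, v i * condMean P A i)^2 ∂P)
          = c⁻¹ * ∫ x in A, (f x - ∑ i, v i * condMean P A i)^2 ∂P by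
        rw [hs]; field_simp]
      rw [show t * (b⁻¹ * ∫ x in B, (f x - ∑ i, v i * condMean P B i)^2 ∂P)
          = c⁻¹ * ∫ x in B, (f x - ∑ i, v i * condMean P B i)^2 ∂P by
        rw [ht]; field_simp]
      rw [mul_add]
      have hcinv : 0 ≤ c⁻¹ := inv_nonneg.2 hcpos.le
      gcongr
  have := log_key hVA hVB hVC hspos htpos hst hpsd
  calc s * Real.log (condCov P A).det + t * Real.log (condCov P B).det
      ≤ Real.log (condCov P C).det := this
    _ = Real.log (condCov P (A ∪ B)).det := rfl
end

section
/- Let α, β, a, b > 0 and let (a_n), (b_n) be real sequences with a_n / (α n^a) → 1 and n^b·(b_n − β) → 0. Then a_n^{b_n} / (α n^a)^β → 1 as n → ∞. -/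
open Filter Topology

theorem rpow_asymptotics (α β a b : ℝ) (hα : 0 < α) (hβ : 0 < β)
    (ha : 0 < a) (hb : 0 < b) (A B : ℕ → ℝ)
    (hApos : ∀ᶠ n in atTop, 0 < A n)
    (hA : Tendsto (fun n : ℕ => A n / (α * (n : ℝ) ^ a)) atTop (𝓝 1))
    (hB : Tendsto (fun n : ℕ => (n : ℝ) ^ b * (B n - β)) atTop (𝓝 0)) :
    Tendsto (fun n : ℕ => A n ^ B n / (α * (n : ℝ) ^ a) ^ β) atTop (𝓝 1) := by
  have hn : Tendsto (fun n : ℕ => (n : ℝ)) atTop atTop := tendsto_natCast_atTop_atTop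
  set M : ℕ → ℝ := fun n => Real.log (α * (n : ℝ) ^ a) with hMdef
  -- log of quotient tends to 0
  have hL : Tendsto (fun n : ℕ => Real.log (A n / (α * (n : ℝ) ^ a))) atTop (𝓝 0) := by
    have := hA.log one_ne_zero
    simpa using this
  -- n^(-b) → 0
  have hnb : Tendsto (fun n : ℕ => (n : ℝ) ^ (-b)) atTop (𝓝 0) :=
    (tendsto_rpow_neg_atTop hb).comp hn
  -- B n - β → 0
  have hBsub : Tendsto (fun n : ℕ => B n - β) atTop (𝓝 0) := by
    have h1 : Tendsto (fun n : ℕ => (n : ℝ) ^ b * (B n - β) * (n : ℝ) ^ (-b)) atTop (𝓝 0) := by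
      simpa using hB.mul hnb
    apply h1.congr'
    filter_upwards [eventually_gt_atTop 0] with n hn1
    have hpos : (0 : ℝ) < (n : ℝ) := by exact_mod_cast hn1
    have : (n : ℝ) ^ b * (n : ℝ) ^ (-b) = 1 := by
      rw [← Real.rpow_add hpos]; simp
    calc (n : ℝ) ^ b * (B n - β) * (n : ℝ) ^ (-b)
        = (B n - β) * ((n : ℝ) ^ b * (n : ℝ) ^ (-b)) := by ring
      _ = B n - β := by rw [this, mul_one]
  have hBβ : Tendsto B atTop (𝓝 β) := by
    have := hBsub.add_const β
    simpa using this
  -- M n / n^b → 0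
  have hMdiv : Tendsto (fun n : ℕ => M n * (n : ℝ) ^ (-b)) atTop (𝓝 0) := by
    have hlogdiv : Tendsto (fun x : ℝ => Real.log x / x ^ b) atTop (𝓝 0) :=
      (isLittleO_log_rpow_atTop hb).tendsto_div_nhds_zero
    have hconst : Tendsto (fun n : ℕ => Real.log α * (n : ℝ) ^ (-b)) atTop (𝓝 0) := by
      simpa using (tendsto_const_nhds (x := Real.log α)).mul hnb
    have hlog : Tendsto (fun n : ℕ => a * (Real.log (n : ℝ) / (n : ℝ) ^ b)) atTop (𝓝 0) := by
      simpa using (hlogdiv.comp hn).const_mul a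
    have hsum := hconst.add hlog
    rw [add_zero] at hsum
    apply hsum.congr'
    filter_upwards [eventually_gt_atTop 0] with n hn1
    have hpos : (0 : ℝ) < (n : ℝ) := by exact_mod_cast hn1
    have hM : M n = Real.log α + a * Real.log (n : ℝ) := by
      rw [hMdef]
      simp only
      rw [Real.log_mul (ne_of_gt hα) (ne_of_gt (Real.rpow_pos_of_pos hpos a)),
        Real.log_rpow hpos]
    rw [hM, Real.rpow_neg hpos.le, div_eq_mul_inv]
    ring
  -- (B n - β) * M n → 0
  have hBM : Tendsto (fun n : ℕ => (B n - β) * M n) atTop (𝓝 0) := by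
    have h1 : Tendsto (fun n : ℕ => ((n : ℝ) ^ b * (B n - β)) * (M n * (n : ℝ) ^ (-b)))
        atTop (𝓝 0) := by simpa using hB.mul hMdiv
    apply h1.congr'
    filter_upwards [eventually_gt_atTop 0] with n hn1
    have hpos : (0 : ℝ) < (n : ℝ) := by exact_mod_cast hn1
    have hone : (n : ℝ) ^ b * (n : ℝ) ^ (-b) = 1 := by
      rw [← Real.rpow_add hpos]; simp
    calc (n : ℝ) ^ b * (B n - β) * (M n * (n : ℝ) ^ (-b))
        = (B n - β) * M n * ((n : ℝ) ^ b * (n : ℝ) ^ (-b)) := by ring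
      _ = (B n - β) * M n := by rw [hone, mul_one]
  -- exponent tends to 0
  have hexp : Tendsto (fun n : ℕ => B n * Real.log (A n / (α * (n : ℝ) ^ a)) + (B n - β) * M n)
      atTop (𝓝 0) := by
    have := (hBβ.mul hL).add hBM
    simpa using this
  have hmain : Tendsto (fun n : ℕ =>
      Real.exp (B n * Real.log (A n / (α * (n : ℝ) ^ a)) + (B n - β) * M n)) atTop (𝓝 1) := by
    have := (Real.continuous_exp.tendsto 0).comp hexp
    simpa [Function.comp_def] using this
  apply hmain.congr'
  filter_upwards [hApos, eventually_gt_atTop 0] with n hA0 hn1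
  have hpos : (0 : ℝ) < (n : ℝ) := by exact_mod_cast hn1
  have hden : (0 : ℝ) < α * (n : ℝ) ^ a := mul_pos hα (Real.rpow_pos_of_pos hpos a)
  have hlogdiv : Real.log (A n / (α * (n : ℝ) ^ a)) = Real.log (A n) - M n :=
    Real.log_div (ne_of_gt hA0) (ne_of_gt hden)
  rw [hlogdiv]
  have e1 : A n ^ B n = Real.exp (Real.log (A n) * B n) := Real.rpow_def_of_pos hA0 _
  have e2 : (α * (n : ℝ) ^ a) ^ β = Real.exp (M n * β) := Real.rpow_def_of_pos hden _
  rw [e1, e2, ← Real.exp_sub]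
  ring_nf
end

section
/- Let λ > 0 and let (x_n) be a real sequence with x_n/(λn) → 1 and x_n/n − λ = o(n^{−a}) for some a > 0. Then the n-th root of Γ(x_n) satisfies Γ(x_n)^{1/n} / (λ n / e)^{λ} → 1 as n → ∞. -/
open Filter Topology

private lemma sq0 {f g : ℕ → ℝ} (hg : Tendsto g atTop (𝓝 0))
    (h : ∀ᶠ n in atTop, |f n| ≤ g n) : Tendsto f atTop (𝓝 0) := by
  have := tendsto_of_tendsto_of_tendsto_of_le_of_le' (f := f) (g := fun n => -g n) (h := g)
    (by simpa using hg.neg) hg (h.mono fun n hn => (abs_le.mp hn).1)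
    (h.mono fun n hn => (abs_le.mp hn).2)
  exact this

private lemma log_div_self_tendsto : Tendsto (fun n : ℕ => Real.log n / n) atTop (𝓝 0) :=
  (Real.isLittleO_log_id_atTop.tendsto_div_nhds_zero).comp tendsto_natCast_atTop_atTop

private lemma aux_fact (lam : ℝ) (hlam : 0 < lam) (m : ℕ → ℕ)
    (h1 : Tendsto (fun n : ℕ => ((m n : ℝ) / n - lam)) atTop (𝓝 0))
    (h2 : Tendsto (fun n : ℕ => ((m n : ℝ) / n - lam) * Real.log n) atTop (𝓝 0)) :
    Tendsto (fun n : ℕ => Real.log ((Nat.factorial (m n)) : ℝ) / n - lam * (Real.log (lam * n) - 1))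
      atTop (𝓝 0) := by
  have hn : Tendsto (fun n : ℕ => (n : ℝ)) atTop atTop := tendsto_natCast_atTop_atTop
  have hinv : Tendsto (fun n : ℕ => (n : ℝ)⁻¹) atTop (𝓝 0) := tendsto_inv_atTop_zero.comp hn
  have hq : Tendsto (fun n : ℕ => (m n : ℝ) / n) atTop (𝓝 lam) := by
    have := h1.add (tendsto_const_nhds : Tendsto (fun _ : ℕ => lam) atTop (𝓝 lam))
    simpa using this
  have hmtop : Tendsto (fun n : ℕ => (m n : ℝ)) atTop atTop := by
    refine (Tendsto.pos_mul_atTop hlam hq hn).congr' ?_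
    filter_upwards [eventually_ge_atTop 1] with n hn1
    have : (n : ℝ) ≠ 0 := by positivity
    field_simp
  have hmN : Tendsto m atTop atTop := tendsto_natCast_atTop_iff.mp hmtop
  have hratio : Tendsto (fun n : ℕ => (m n : ℝ) / (lam * n)) atTop (𝓝 1) := by
    have := hq.div_const lam
    rw [div_self hlam.ne'] at this
    refine this.congr fun n => by rw [div_div, mul_comm (n : ℝ) lam]
  have hlogratio : Tendsto (fun n : ℕ => Real.log ((m n : ℝ) / (lam * n))) atTop (𝓝 0) := by
    have := (Real.continuousAt_log one_ne_zero).tendsto.comp hratio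
    simpa [Function.comp_def] using this
  have hspos : (0 : ℝ) < Real.sqrt Real.pi := Real.sqrt_pos.mpr Real.pi_pos
  have hS : Tendsto (fun n : ℕ => Real.log (Stirling.stirlingSeq (m n))) atTop
      (𝓝 (Real.log (Real.sqrt Real.pi))) :=
    (Real.continuousAt_log hspos.ne').tendsto.comp
      (Stirling.tendsto_stirlingSeq_sqrt_pi.comp hmN)
  -- the explicit sum of terms
  have hT : Tendsto (fun n : ℕ =>
      Real.log (Stirling.stirlingSeq (m n)) * (n : ℝ)⁻¹
      + (Real.log 2 + Real.log lam) * (n : ℝ)⁻¹ / 2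
      + Real.log ((m n : ℝ) / (lam * n)) * ((n : ℝ)⁻¹ / 2)
      + Real.log n / n / 2
      + ((m n : ℝ) / n - lam) * (Real.log lam - 1)
      + ((m n : ℝ) / n - lam) * Real.log n
      + ((m n : ℝ) / n) * Real.log ((m n : ℝ) / (lam * n))) atTop (𝓝 0) := by
    have t1 := hS.mul hinv
    have t2 := ((hinv.const_mul (Real.log 2 + Real.log lam)).div_const 2)
    have t3 := hlogratio.mul (hinv.div_const 2)
    have t4 := log_div_self_tendsto.div_const 2
    have t5 := h1.mul_const (Real.log lam - 1)
    have t7 := hq.mul hlogratio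
    have := ((((((t1.add t2).add t3).add t4).add t5).add h2).add t7)
    simpa using this
  refine hT.congr' ?_
  filter_upwards [eventually_ge_atTop 1, hmN.eventually (eventually_ge_atTop 1)] with n hn1 hm1
  have hn0 : (n : ℝ) ≠ 0 := by positivity
  have hnpos : (0 : ℝ) < n := by exact_mod_cast hn1
  have hm0 : (0 : ℝ) < (m n : ℝ) := by exact_mod_cast hm1
  -- log factorial formula
  have hfact : Real.log ((Nat.factorial (m n)) : ℝ) = Real.log (Stirling.stirlingSeq (m n))
      + (1 / 2) * (Real.log 2 + Real.log (m n)) + (m n : ℝ) * (Real.log (m n) - 1) := by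
    have h := Stirling.log_stirlingSeq_formula (m n)
    have h2m : Real.log (2 * (m n : ℝ)) = Real.log 2 + Real.log (m n) :=
      Real.log_mul two_ne_zero hm0.ne'
    have hme : Real.log ((m n : ℝ) / Real.exp 1) = Real.log (m n) - 1 := by
      rw [Real.log_div hm0.ne' (Real.exp_ne_zero 1), Real.log_exp]
    rw [h2m, hme] at h
    linarith
  have hlr : Real.log ((m n : ℝ) / (lam * n)) =
      Real.log (m n) - (Real.log lam + Real.log n) := by
    rw [Real.log_div hm0.ne' (by positivity), Real.log_mul hlam.ne' hn0]
  have hln : Real.log (lam * n) = Real.log lam + Real.log n := Real.log_mul hlam.ne' hn0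
  rw [hfact, hlr, hln]
  field_simp
  ring

theorem gamma_nth_root_asymptotics (lam : ℝ) (hlam : 0 < lam)
    (x : ℕ → ℝ) (a : ℝ) (ha : 0 < a)
    (hx : Tendsto (fun n : ℕ => x n / (lam * n)) atTop (𝓝 1))
    (hxa : Tendsto (fun n : ℕ => (n : ℝ) ^ a * (x n / n - lam)) atTop (𝓝 0)) :
    Tendsto
      (fun n : ℕ =>
        Real.Gamma (x n) ^ ((n : ℝ)⁻¹) / (lam * n / Real.exp 1) ^ lam)
      atTop (𝓝 1) := by
  have hn : Tendsto (fun n : ℕ => (n : ℝ)) atTop atTop := tendsto_natCast_atTop_atTop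
  have hinv : Tendsto (fun n : ℕ => (n : ℝ)⁻¹) atTop (𝓝 0) := tendsto_inv_atTop_zero.comp hn
  -- x n → ∞
  have hxtop : Tendsto x atTop atTop := by
    refine (Tendsto.pos_mul_atTop one_pos hx (hn.const_mul_atTop hlam)).congr' ?_
    filter_upwards [eventually_ge_atTop 1] with n hn1
    have hn0 : (n : ℝ) ≠ 0 := by positivity
    field_simp
  -- x n / n - lam → 0
  have hx0 : Tendsto (fun n : ℕ => x n / n - lam) atTop (𝓝 0) := by
    have h := hx.mul_const lam
    rw [one_mul] at h
    have h' : Tendsto (fun n : ℕ => x n / n) atTop (𝓝 lam) := by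
      refine h.congr' ?_
      filter_upwards [eventually_ge_atTop 1] with n hn1
      have hn0 : (n : ℝ) ≠ 0 := by positivity
      field_simp
    simpa using h'.sub (tendsto_const_nhds : Tendsto (fun _ : ℕ => lam) atTop (𝓝 lam))
  -- (x n / n - lam) * log n → 0
  have hlogpow : Tendsto (fun n : ℕ => Real.log n / (n : ℝ) ^ a) atTop (𝓝 0) :=
    ((isLittleO_log_rpow_atTop ha).tendsto_div_nhds_zero).comp hn
  have hx0log : Tendsto (fun n : ℕ => (x n / n - lam) * Real.log n) atTop (𝓝 0) := by
    have h := hxa.mul hlogpow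
    rw [mul_zero] at h
    refine h.congr' ?_
    filter_upwards [eventually_ge_atTop 1] with n hn1
    have hp : (0 : ℝ) < (n : ℝ) ^ a := Real.rpow_pos_of_pos (by exact_mod_cast hn1) a
    field_simp
  -- floor sequences
  set m : ℕ → ℕ := fun n => ⌊x n⌋₊ with hm
  set m' : ℕ → ℕ := fun n => ⌊x n⌋₊ - 1 with hm'
  have hev3 : ∀ᶠ n in atTop, 3 ≤ x n := hxtop.eventually_ge_atTop 3
  have hevm : ∀ᶠ n in atTop, (m n : ℝ) ≤ x n ∧ x n < (m n : ℝ) + 1 ∧ 3 ≤ m n ∧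
      (m' n : ℝ) = (m n : ℝ) - 1 := by
    filter_upwards [hev3] with n h3
    have hx0' : (0 : ℝ) ≤ x n := by linarith
    have hfl : (m n : ℝ) ≤ x n := Nat.floor_le hx0'
    have hfl2 : x n < (m n : ℝ) + 1 := by exact_mod_cast Nat.lt_floor_add_one (x n)
    have h3m : 3 ≤ m n := by
      have := Nat.le_floor (α := ℝ) (n := 3) (by exact_mod_cast h3)
      exact_mod_cast this
    refine ⟨hfl, hfl2, h3m, ?_⟩
    have : m' n = m n - 1 := rfl
    rw [this, Nat.cast_sub (by omega)]
    norm_num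
  -- the two hypotheses of aux_fact for a sequence close to x
  have key : ∀ y : ℕ → ℕ, (∀ᶠ n in atTop, |(y n : ℝ) - x n| ≤ 2) →
      Tendsto (fun n : ℕ => ((y n : ℝ) / n - lam)) atTop (𝓝 0) ∧
      Tendsto (fun n : ℕ => ((y n : ℝ) / n - lam) * Real.log n) atTop (𝓝 0) := by
    intro y hy
    have hd : Tendsto (fun n : ℕ => ((y n : ℝ) - x n) / n) atTop (𝓝 0) := by
      refine sq0 (g := fun n : ℕ => 2 * (n : ℝ)⁻¹) (by simpa using hinv.const_mul 2) ?_
      filter_upwards [hy, eventually_ge_atTop 1] with n h2 hn1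
      have hnpos : (0 : ℝ) < n := by exact_mod_cast hn1
      rw [abs_div, abs_of_pos hnpos, div_eq_mul_inv]
      exact mul_le_mul_of_nonneg_right h2 (by positivity)
    have hdlog : Tendsto (fun n : ℕ => ((y n : ℝ) - x n) / n * Real.log n) atTop (𝓝 0) := by
      refine sq0 (g := fun n : ℕ => 2 * (Real.log n / n)) (by simpa using log_div_self_tendsto.const_mul 2) ?_
      filter_upwards [hy, eventually_ge_atTop 1] with n h2 hn1
      have hnpos : (0 : ℝ) < n := by exact_mod_cast hn1
      have hlog0 : 0 ≤ Real.log n := Real.log_natCast_nonneg n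
      rw [abs_mul, abs_div, abs_of_pos hnpos, abs_of_nonneg hlog0]
      calc |(y n : ℝ) - x n| / n * Real.log n ≤ 2 / n * Real.log n := by gcongr
        _ = 2 * (Real.log n / n) := by ring
    have heq : ∀ n : ℕ, (y n : ℝ) / n - lam = (x n / n - lam) + ((y n : ℝ) - x n) / n := by
      intro n; rw [sub_div]; ring
    constructor
    · refine (by simpa using hx0.add hd : Tendsto _ atTop (𝓝 (0:ℝ))).congr fun n => (heq n).symm
    · have := hx0log.add (hdlog)
      rw [add_zero] at this
      refine this.congr fun n => ?_
      rw [heq n]; ring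
  have hym : ∀ᶠ n in atTop, |(m n : ℝ) - x n| ≤ 2 := by
    filter_upwards [hevm] with n ⟨h1, h2, _, _⟩
    rw [abs_le]; constructor <;> linarith
  have hym' : ∀ᶠ n in atTop, |(m' n : ℝ) - x n| ≤ 2 := by
    filter_upwards [hevm] with n ⟨h1, h2, _, h4⟩
    rw [h4, abs_le]; constructor <;> linarith
  obtain ⟨hm1, hm2⟩ := key m hym
  obtain ⟨hm'1, hm'2⟩ := key m' hym'
  have hU := aux_fact lam hlam m hm1 hm2
  have hL := aux_fact lam hlam m' hm'1 hm'2
  -- squeeze for log Gamma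
  have hG : Tendsto (fun n : ℕ =>
      Real.log (Real.Gamma (x n)) / n - lam * (Real.log (lam * n) - 1)) atTop (𝓝 0) := by
    refine tendsto_of_tendsto_of_tendsto_of_le_of_le' hL hU ?_ ?_
    · filter_upwards [hevm, eventually_ge_atTop 1] with n ⟨h1, h2, h3, h4⟩ hn1
      have hnpos : (0 : ℝ) < n := by exact_mod_cast hn1
      have hxIci : x n ∈ Set.Ici (2 : ℝ) := by
        simp only [Set.mem_Ici]
        have : (3 : ℝ) ≤ (m n : ℝ) := by exact_mod_cast h3
        linarith
      have hmI : (m' n : ℝ) + 1 ∈ Set.Ici (2 : ℝ) := by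
        simp only [Set.mem_Ici, h4]
        have : (3 : ℝ) ≤ (m n : ℝ) := by exact_mod_cast h3
        linarith
      have hle : (m' n : ℝ) + 1 ≤ x n := by rw [h4]; linarith
      have hGle : Real.Gamma ((m' n : ℝ) + 1) ≤ Real.Gamma (x n) :=
        Real.Gamma_strictMonoOn_Ici.monotoneOn hmI hxIci hle
      rw [Real.Gamma_nat_eq_factorial] at hGle
      have hfpos : (0 : ℝ) < (Nat.factorial (m' n) : ℝ) := by positivity
      have := Real.log_le_log hfpos hGle
      gcongr
    · filter_upwards [hevm, eventually_ge_atTop 1] with n ⟨h1, h2, h3, h4⟩ hn1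
      have hnpos : (0 : ℝ) < n := by exact_mod_cast hn1
      have hxIci : x n ∈ Set.Ici (2 : ℝ) := by
        simp only [Set.mem_Ici]
        have : (3 : ℝ) ≤ (m n : ℝ) := by exact_mod_cast h3
        linarith
      have hmI : (m n : ℝ) + 1 ∈ Set.Ici (2 : ℝ) := by
        simp only [Set.mem_Ici]
        have : (3 : ℝ) ≤ (m n : ℝ) := by exact_mod_cast h3
        linarith
      have hle : x n ≤ (m n : ℝ) + 1 := by linarith
      have hGle : Real.Gamma (x n) ≤ Real.Gamma ((m n : ℝ) + 1) :=
        Real.Gamma_strictMonoOn_Ici.monotoneOn hxIci hmI hle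
      rw [Real.Gamma_nat_eq_factorial] at hGle
      have hGpos : (0 : ℝ) < Real.Gamma (x n) := Real.Gamma_pos_of_pos (by linarith)
      have := Real.log_le_log hGpos hGle
      gcongr
  -- conclude via exp
  have hfinal := (Real.continuous_exp.tendsto 0).comp hG
  rw [Real.exp_zero] at hfinal
  refine hfinal.congr' ?_
  filter_upwards [hevm, eventually_ge_atTop 1] with n ⟨h1, h2, h3, _⟩ hn1
  have hnpos : (0 : ℝ) < n := by exact_mod_cast hn1
  have hGpos : (0 : ℝ) < Real.Gamma (x n) := by
    apply Real.Gamma_pos_of_pos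
    have : (3 : ℝ) ≤ (m n : ℝ) := by exact_mod_cast h3
    linarith
  have hbpos : (0 : ℝ) < lam * n / Real.exp 1 := by positivity
  simp only [Function.comp]
  rw [Real.rpow_def_of_pos hGpos, Real.rpow_def_of_pos hbpos, ← Real.exp_sub]
  congr 1
  rw [Real.log_div (by positivity) (Real.exp_ne_zero 1), Real.log_exp]
  ring
end

section
/- Let λ > 0, d ∈ ℕ, and (x_n) satisfy x_n/(λn) → 1 and x_n/n − λ = o(n^{−a}) for some a > 0. Then Γ_d(x_n)^{1/n} / (λn/e)^{λd} → 1, where Γ_d(x) = π^{d(d−1)/4} ∏_{j=1}^d Γ(x − (j−1)/2) is the multivariate Gamma function. -/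
open Filter Topology Finset

/-- The multivariate Gamma function
`Γ_d(x) = π^{d(d−1)/4} ∏_{j=1}^d Γ(x − (j−1)/2)`. -/
noncomputable def multivariateGamma (d : ℕ) (x : ℝ) : ℝ :=
  Real.pi ^ ((d * (d - 1) : ℝ) / 4) *
    ∏ j ∈ Finset.range d, Real.Gamma (x - j / 2)


lemma f_mono {t u : ℝ} (ht : 3 ≤ t) (htu : t ≤ u) :
    t * Real.log t - t ≤ u * Real.log u - u := by
  have h1 : 1 ≤ Real.log t := by
    rw [Real.le_log_iff_exp_le (by linarith)]
    calc Real.exp 1 ≤ 2.7182818286 := (Real.exp_one_lt_d9).le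
    _ ≤ 3 := by norm_num
    _ ≤ t := ht
  have h2 : Real.log t ≤ Real.log u := Real.log_le_log (by linarith) htu
  nlinarith

lemma f_lip {t u : ℝ} (ht : 1 ≤ t) (htu : t ≤ u) :
    u * Real.log u - u - (t * Real.log t - t) ≤ (u - t) * Real.log u := by
  have ht0 : 0 < t := by linarith
  have hu0 : 0 < u := by linarith
  have h1 : Real.log (u / t) ≤ u / t - 1 := Real.log_le_sub_one_of_pos (by positivity)
  rw [Real.log_div (ne_of_gt hu0) (ne_of_gt ht0)] at h1
  have key : t * Real.log u - t * Real.log t ≤ u - t := by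
    have := mul_le_mul_of_nonneg_left h1 ht0.le
    calc t * Real.log u - t * Real.log t = t * (Real.log u - Real.log t) := by ring
    _ ≤ t * (u / t - 1) := this
    _ = u - t := by field_simp
  nlinarith [key]

lemma log_factorial_eq (n : ℕ) (hn : 1 ≤ n) :
    Real.log (Nat.factorial n) = Real.log (Stirling.stirlingSeq n) + 1/2 * Real.log (2*n)
      + ((n:ℝ) * Real.log n - n) := by
  have hn0 : (0:ℝ) < n := by exact_mod_cast hn
  have h := Stirling.log_stirlingSeq_formula n
  have hlog : Real.log ((n:ℝ) / Real.exp 1) = Real.log n - 1 := by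
    rw [Real.log_div (ne_of_gt hn0) (Real.exp_ne_zero 1), Real.log_exp]
  rw [hlog] at h
  have : (n:ℝ) * (Real.log n - 1) = (n:ℝ) * Real.log n - n := by ring
  rw [this] at h
  linarith

lemma Ebound (N₀ : ℕ)
    (hN₀ : ∀ b ≥ N₀, 0 ≤ Real.log (Stirling.stirlingSeq b) ∧ Real.log (Stirling.stirlingSeq b) ≤ 2)
    (Y : ℝ) (hyn : (N₀:ℝ) + 4 ≤ Y) :
    -(2 + 1/2 * Real.log (2 * Y) + 2 * Real.log Y) ≤
        Real.log (Real.Gamma Y) - (Y * Real.log Y - Y) ∧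
      Real.log (Real.Gamma Y) - (Y * Real.log Y - Y) ≤
        2 + 1/2 * Real.log (2 * Y) + 2 * Real.log Y := by
  have hy4 : (4:ℝ) ≤ Y := by
    have : (0:ℝ) ≤ (N₀:ℝ) := Nat.cast_nonneg _
    linarith
  have hy0 : (0:ℝ) < Y := by linarith
  set m := ⌊Y⌋₊ with hm
  have hm_le : (m:ℝ) ≤ Y := Nat.floor_le hy0.le
  have hlt : Y < m + 1 := Nat.lt_floor_add_one _
  have hmN : N₀ + 4 ≤ m := by
    apply Nat.le_floor; push_cast; linarith
  have hm4 : (4:ℝ) ≤ (m:ℝ) := by exact_mod_cast by omega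
  have hGy : 0 < Real.Gamma Y := Real.Gamma_pos_of_pos hy0
  have hly : 0 ≤ Real.log Y := Real.log_nonneg (by linarith)
  have hl2y : 0 ≤ Real.log (2 * Y) := Real.log_nonneg (by linarith)
  constructor
  · -- lower bound
    set k := m - 1 with hk
    have hkm : ((k:ℝ)) + 1 = (m:ℝ) := by
      have : k + 1 = m := by omega
      exact_mod_cast this
    have hk3 : (3:ℝ) ≤ (k:ℝ) := by linarith
    have hGl : Real.Gamma ((k:ℝ) + 1) ≤ Real.Gamma Y := by
      apply Real.Gamma_strictMonoOn_Ici.monotoneOn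
      · exact Set.mem_Ici.mpr (by linarith)
      · exact Set.mem_Ici.mpr (by linarith)
      · linarith
    rw [Real.Gamma_nat_eq_factorial] at hGl
    have hlogl : Real.log (Nat.factorial k) ≤ Real.log (Real.Gamma Y) :=
      Real.log_le_log (by positivity) hGl
    have hfact_k := log_factorial_eq k (by omega)
    have hsk : 0 ≤ Real.log (Stirling.stirlingSeq k) := (hN₀ k (by omega)).1
    have hl2k : 0 ≤ Real.log (2*(k:ℝ)) := Real.log_nonneg (by linarith)
    have hflip := f_lip (t := (k:ℝ)) (u := Y) (by linarith) (by linarith)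
    have hyk : Y - (k:ℝ) ≤ 2 := by linarith
    have hmul : (Y - (k:ℝ)) * Real.log Y ≤ 2 * Real.log Y :=
      mul_le_mul_of_nonneg_right hyk hly
    linarith only [hlogl, hfact_k, hsk, hl2k, hflip, hmul, hly, hl2y]
  · -- upper bound
    have hGu : Real.Gamma Y ≤ Real.Gamma ((m:ℝ) + 1) := by
      apply Real.Gamma_strictMonoOn_Ici.monotoneOn
      · exact Set.mem_Ici.mpr (by linarith)
      · exact Set.mem_Ici.mpr (by linarith)
      · linarith
    rw [Real.Gamma_nat_eq_factorial] at hGu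
    have hlogu : Real.log (Real.Gamma Y) ≤ Real.log (Nat.factorial m) :=
      Real.log_le_log hGy hGu
    have hfact_m := log_factorial_eq m (by omega)
    have hsm : Real.log (Stirling.stirlingSeq m) ≤ 2 := (hN₀ m (by omega)).2
    have hfmono : (m:ℝ) * Real.log m - m ≤ Y * Real.log Y - Y :=
      f_mono (by linarith) hm_le
    have hl2m : Real.log (2*(m:ℝ)) ≤ Real.log (2 * Y) :=
      Real.log_le_log (by positivity) (by linarith)
    linarith only [hlogu, hfact_m, hsm, hfmono, hl2m, hly]

lemma log_div_rpow_nat {r : ℝ} (hr : 0 < r) :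
    Tendsto (fun n : ℕ => Real.log n / (n : ℝ) ^ r) atTop (𝓝 0) :=
  ((isLittleO_log_rpow_atTop hr).tendsto_div_nhds_zero).comp
    tendsto_natCast_atTop_atTop

lemma stirling_bdd : ∀ᶠ n : ℕ in atTop,
    0 ≤ Real.log (Stirling.stirlingSeq n) ∧ Real.log (Stirling.stirlingSeq n) ≤ 2 := by
  have h1 : (1 : ℝ) < Real.sqrt Real.pi := by
    rw [show (1:ℝ) = Real.sqrt 1 by simp]
    exact Real.sqrt_lt_sqrt (by norm_num) (by linarith [Real.pi_gt_three])
  have h2 : Real.sqrt Real.pi < 2 := by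
    rw [show (2:ℝ) = Real.sqrt 4 by
      rw [show (4:ℝ) = 2^2 by norm_num, Real.sqrt_sq (by norm_num)]]
    exact Real.sqrt_lt_sqrt Real.pi_pos.le (by linarith [Real.pi_lt_d2])
  have h : ∀ᶠ n : ℕ in atTop, Stirling.stirlingSeq n ∈ Set.Ioo (1:ℝ) 2 :=
    Stirling.tendsto_stirlingSeq_sqrt_pi (Ioo_mem_nhds h1 h2)
  filter_upwards [h] with n hn
  refine ⟨Real.log_nonneg hn.1.le, ?_⟩
  calc Real.log (Stirling.stirlingSeq n) ≤ Real.log 2 :=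
      Real.log_le_log (by linarith [hn.1]) hn.2.le
  _ ≤ 2 := by linarith [Real.log_two_lt_d9]

lemma keyB (lam : ℝ) (hlam : 0 < lam) (x : ℕ → ℝ) (a : ℝ) (ha : 0 < a)
    (hx : Tendsto (fun n : ℕ => x n / (lam * n)) atTop (𝓝 1))
    (hxa : Tendsto (fun n : ℕ => (n : ℝ) ^ a * (x n / n - lam)) atTop (𝓝 0))
    (c : ℝ) :
    Tendsto (fun n : ℕ => Real.log (Real.Gamma (x n - c)) / n
      - lam * Real.log (lam * n / Real.exp 1)) atTop (𝓝 0) := by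
  set y : ℕ → ℝ := fun n => x n - c with hy
  have hc : Tendsto (fun n : ℕ => c / (lam * n)) atTop (𝓝 0) := by
    simpa [div_div] using tendsto_const_div_atTop_nhds_zero_nat (c / lam)
  have h1 : Tendsto (fun n : ℕ => y n / (lam * n)) atTop (𝓝 1) := by
    have := hx.sub hc
    simpa [hy, sub_div] using this
  have h2 : Tendsto y atTop atTop := by
    have hev : ∀ᶠ n : ℕ in atTop, lam / 2 * n ≤ y n := by
      have h12 : ∀ᶠ n : ℕ in atTop, (1:ℝ)/2 < y n / (lam * n) :=
        h1.eventually_const_lt (by norm_num)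
      filter_upwards [h12, eventually_ge_atTop 1] with n hn hn1
      have hn0 : (0:ℝ) < (n:ℝ) := by exact_mod_cast hn1
      have hln : (0:ℝ) < lam * n := by positivity
      rw [lt_div_iff₀ hln] at hn
      nlinarith
    exact tendsto_atTop_mono' _ hev
      ((tendsto_natCast_atTop_atTop).const_mul_atTop (by linarith : (0:ℝ) < lam / 2))
  have h3 : Tendsto (fun n : ℕ => Real.log (y n) - Real.log (lam * n)) atTop (𝓝 0) := by
    have hcont : Tendsto Real.log (𝓝 1) (𝓝 0) := by
      simpa using (Real.continuousAt_log (by norm_num : (1:ℝ) ≠ 0)).tendsto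
    apply (hcont.comp h1).congr'
    filter_upwards [h2.eventually_ge_atTop 1, eventually_ge_atTop 1] with n hyn hn1
    have hn0 : (0:ℝ) < (n:ℝ) := by exact_mod_cast hn1
    simp only [Function.comp]
    rw [Real.log_div (by linarith) (by positivity)]
  have key5 : ∀ r : ℝ, 0 < r →
      Tendsto (fun n : ℕ => Real.log (y n) / (n:ℝ) ^ r) atTop (𝓝 0) := by
    intro r hr
    have hinv : Tendsto (fun n : ℕ => ((n:ℝ)^r)⁻¹) atTop (𝓝 0) :=
      ((tendsto_rpow_atTop hr).comp tendsto_natCast_atTop_atTop).inv_tendsto_atTop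
    have t1 := h3.mul hinv
    have t2 : Tendsto (fun n : ℕ => Real.log lam * ((n:ℝ)^r)⁻¹) atTop (𝓝 0) := by
      simpa using hinv.const_mul (Real.log lam)
    have t3 := log_div_rpow_nat hr
    have h4 := (t1.add t2).add t3
    rw [show (0:ℝ) * 0 + 0 + 0 = 0 by ring] at h4
    apply h4.congr'
    filter_upwards [eventually_ge_atTop 1] with n hn1
    have hn0 : (0:ℝ) < (n:ℝ) := by exact_mod_cast hn1
    rw [Real.log_mul (ne_of_gt hlam) (ne_of_gt hn0)]
    rw [div_eq_mul_inv, div_eq_mul_inv]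
    ring
  have hlogyn : Tendsto (fun n : ℕ => Real.log (y n) / n) atTop (𝓝 0) := by
    have := key5 1 one_pos
    simpa [Real.rpow_one] using this
  obtain ⟨N₀, hN₀⟩ := eventually_atTop.mp stirling_bdd
  have hB : Tendsto (fun n : ℕ =>
      (2 + 1/2 * Real.log (2 * y n) + 2 * Real.log (y n)) / n) atTop (𝓝 0) := by
    have hB0 := (tendsto_const_div_atTop_nhds_zero_nat (2 + 1/2*Real.log 2)).add
      ((hlogyn.const_mul (1/2:ℝ)).add (hlogyn.const_mul (2:ℝ)))
    rw [show (0:ℝ) + ((1:ℝ)/2*0 + 2*0) = 0 by ring] at hB0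
    apply hB0.congr'
    filter_upwards [h2.eventually_ge_atTop 1] with n hyn
    rw [Real.log_mul two_ne_zero (by linarith)]
    ring
  have h6 : Tendsto (fun n : ℕ =>
      (Real.log (Real.Gamma (y n)) - (y n * Real.log (y n) - y n)) / n) atTop (𝓝 0) := by
    apply tendsto_of_tendsto_of_tendsto_of_le_of_le'
      (by simpa only [neg_zero] using hB.neg) hB
    · filter_upwards [h2.eventually_ge_atTop ((N₀:ℝ) + 4), eventually_ge_atTop 1] with n hEb hn1
      have hn0 : (0:ℝ) < (n:ℝ) := by exact_mod_cast hn1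
      rw [← neg_div]
      gcongr
      exact (Ebound N₀ hN₀ (y n) hEb).1
    · filter_upwards [h2.eventually_ge_atTop ((N₀:ℝ) + 4), eventually_ge_atTop 1] with n hEb hn1
      have hn0 : (0:ℝ) < (n:ℝ) := by exact_mod_cast hn1
      gcongr
      exact (Ebound N₀ hN₀ (y n) hEb).2
  have hinva : Tendsto (fun n : ℕ => ((n:ℝ)^a)⁻¹) atTop (𝓝 0) :=
    ((tendsto_rpow_atTop ha).comp tendsto_natCast_atTop_atTop).inv_tendsto_atTop
  have htA : Tendsto (fun n : ℕ => (Real.log (y n) - 1) / (n:ℝ)^a) atTop (𝓝 0) := by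
    have h5 := (key5 a ha).sub hinva
    rw [show (0:ℝ) - 0 = 0 by ring] at h5
    apply h5.congr (fun n => ?_)
    rw [sub_div, one_div]
  have htB : Tendsto (fun n : ℕ => (Real.log (y n) - 1) / n) atTop (𝓝 0) := by
    have h5 := hlogyn.sub tendsto_one_div_atTop_nhds_zero_nat
    rw [show (0:ℝ) - 0 = 0 by ring] at h5
    apply h5.congr (fun n => ?_)
    rw [sub_div]
  have hG := ((h6.add (hxa.mul htA)).add (htB.const_mul (-c))).add (h3.const_mul lam)
  rw [show (0:ℝ) + 0 * 0 + -c * 0 + lam * 0 = 0 by ring] at hG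
  apply hG.congr'
  filter_upwards [h2.eventually_ge_atTop 1, eventually_ge_atTop 1] with n hyn hn1
  have hn0 : (0:ℝ) < (n:ℝ) := by exact_mod_cast hn1
  have hna : ((n:ℝ)^a) ≠ 0 := by positivity
  have hlogle : Real.log (lam * n / Real.exp 1) = Real.log (lam * n) - 1 := by
    rw [Real.log_div (by positivity) (Real.exp_ne_zero 1), Real.log_exp]
  simp only [hy]
  rw [hlogle]
  have hn' : (n:ℝ) ≠ 0 := ne_of_gt hn0
  field_simp
  ring

theorem multivariateGamma_nth_root_asymptotics (lam : ℝ) (hlam : 0 < lam)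
    (d : ℕ) (x : ℕ → ℝ) (a : ℝ) (ha : 0 < a)
    (hx : Tendsto (fun n : ℕ => x n / (lam * n)) atTop (𝓝 1))
    (hxa : Tendsto (fun n : ℕ => (n : ℝ) ^ a * (x n / n - lam)) atTop (𝓝 0)) :
    Tendsto
      (fun n : ℕ =>
        multivariateGamma d (x n) ^ ((n : ℝ)⁻¹)
          / (lam * n / Real.exp 1) ^ (lam * d))
      atTop (𝓝 1) := by
  have hx2 : Tendsto x atTop atTop := by
    have hev : ∀ᶠ n : ℕ in atTop, lam / 2 * n ≤ x n := by
      have h12 : ∀ᶠ n : ℕ in atTop, (1:ℝ)/2 < x n / (lam * n) :=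
        hx.eventually_const_lt (by norm_num)
      filter_upwards [h12, eventually_ge_atTop 1] with n hn hn1
      have hn0 : (0:ℝ) < (n:ℝ) := by exact_mod_cast hn1
      have hln : (0:ℝ) < lam * n := by positivity
      rw [lt_div_iff₀ hln] at hn
      nlinarith
    exact tendsto_atTop_mono' _ hev
      ((tendsto_natCast_atTop_atTop).const_mul_atTop (by linarith : (0:ℝ) < lam / 2))
  have hsum : Tendsto (fun n : ℕ => ∑ j ∈ Finset.range d,
      (Real.log (Real.Gamma (x n - (j:ℝ)/2)) / n
        - lam * Real.log (lam * n / Real.exp 1))) atTop (𝓝 0) := by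
    have := tendsto_finset_sum (Finset.range d)
      (fun j (_ : j ∈ Finset.range d) => keyB lam hlam x a ha hx hxa ((j:ℝ)/2))
    simpa using this
  have hconst : Tendsto
      (fun n : ℕ => ((d * (d - 1) : ℝ) / 4 * Real.log Real.pi) / n) atTop (𝓝 0) :=
    tendsto_const_div_atTop_nhds_zero_nat _
  have hT := hconst.add hsum
  rw [add_zero] at hT
  have hexp : Tendsto (fun n : ℕ => Real.exp
      (((d * (d - 1) : ℝ) / 4 * Real.log Real.pi) / n + ∑ j ∈ Finset.range d,
        (Real.log (Real.Gamma (x n - (j:ℝ)/2)) / n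
          - lam * Real.log (lam * n / Real.exp 1)))) atTop (𝓝 1) := by
    have := (Real.continuous_exp.tendsto 0).comp hT
    simpa [Real.exp_zero, Function.comp_def] using this
  apply hexp.congr'
  filter_upwards [hx2.eventually_ge_atTop (2 + 2*(d:ℝ)), eventually_ge_atTop 1] with n hxn hn1
  have hn0 : (0:ℝ) < (n:ℝ) := by exact_mod_cast hn1
  have hd0 : (0:ℝ) ≤ (d:ℝ) := Nat.cast_nonneg _
  have hΓpos : ∀ j ∈ Finset.range d, 0 < Real.Gamma (x n - (j:ℝ)/2) := by
    intro j hj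
    have hjd : (j:ℝ) < (d:ℝ) := by exact_mod_cast Finset.mem_range.mp hj
    exact Real.Gamma_pos_of_pos (by linarith)
  have hprodpos : 0 < ∏ j ∈ Finset.range d, Real.Gamma (x n - (j:ℝ)/2) :=
    Finset.prod_pos hΓpos
  have hpipos : 0 < Real.pi ^ ((d * (d - 1) : ℝ) / 4) :=
    Real.rpow_pos_of_pos Real.pi_pos _
  have hMG : 0 < multivariateGamma d (x n) := by
    rw [multivariateGamma]; exact mul_pos hpipos hprodpos
  have hbase : 0 < lam * (n:ℝ) / Real.exp 1 := by positivity
  have hlogMG : Real.log (multivariateGamma d (x n)) =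
      (d * (d - 1) : ℝ) / 4 * Real.log Real.pi
        + ∑ j ∈ Finset.range d, Real.log (Real.Gamma (x n - (j:ℝ)/2)) := by
    rw [multivariateGamma, Real.log_mul (ne_of_gt hpipos) (ne_of_gt hprodpos),
      Real.log_rpow Real.pi_pos,
      Real.log_prod (fun j hj => ne_of_gt (hΓpos j hj))]
  rw [Real.rpow_def_of_pos hMG, Real.rpow_def_of_pos hbase, ← Real.exp_sub]
  congr 1
  rw [hlogMG, Finset.sum_sub_distrib, Finset.sum_const, Finset.card_range,
    nsmul_eq_mul, ← Finset.sum_div]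
  ring
end

section
/- Let g(p) = ∏_{k=1}^K pₖ^{αₖ} and g_n(p) = ∏_{k=1}^K pₖ^{c_{n,k}} on the open simplex ▲^K, where αₖ > 0, ∑ₖ αₖ = 1, and c_{n,k} → αₖ uniformly in k. Then sup_{p∈▲^K} |g_n(p)·g(p)^{−1/2} − g(p)^{1/2}| → 0 as n → ∞. -/
open Filter Topology Finset

/-- The open probability simplex `▲^K`. -/
def openSimplex (K : ℕ) : Set (Fin K → ℝ) :=
  {p | (∀ k, 0 < p k ∧ p k < 1) ∧ ∑ k, p k = 1}

lemma rpow_mul_neg_log_le {x m : ℝ} (hx0 : 0 < x) (hx1 : x < 1) (hm : 0 < m) :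
    x ^ m * (-Real.log x) ≤ 1 / m := by
  have hlog : Real.log x < 0 := Real.log_neg hx0 hx1
  have hxm : x ^ m = Real.exp (Real.log x * m) := Real.rpow_def_of_pos hx0 m
  set t : ℝ := -(m * Real.log x) with ht
  have ht0 : 0 < t := by nlinarith
  have h1 : t ≤ Real.exp t := by nlinarith [Real.add_one_le_exp t]
  have h2 : Real.exp (-t) * Real.exp t = 1 := by
    rw [← Real.exp_add]; simp
  have h3 : x ^ m = Real.exp (-t) := by rw [hxm, ht]; ring_nf
  have h4 : Real.exp (-t) * t ≤ 1 := by
    nlinarith [Real.exp_pos (-t), Real.exp_pos t]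
  rw [h3]
  have h5 : Real.exp (-t) * (-Real.log x) = (Real.exp (-t) * t) / m := by
    field_simp [ht]; ring
  rw [h5]
  exact div_le_div_of_nonneg_right h4 hm.le

lemma rpow_sub_rpow_le {x m a b : ℝ} (hx0 : 0 < x) (hx1 : x < 1)
    (hm : 0 < m) (hb : m ≤ b) (hba : b ≤ a) :
    x ^ b - x ^ a ≤ (a - b) / m := by
  have h1 : x ^ a = x ^ b * x ^ (a - b) := by
    rw [← Real.rpow_add hx0]; ring_nf
  have h2 : 1 - x ^ (a - b) ≤ (a - b) * (-Real.log x) := by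
    have he := Real.add_one_le_exp (Real.log x * (a - b))
    rw [Real.rpow_def_of_pos hx0]
    nlinarith
  have h3 : x ^ b ≤ x ^ m := Real.rpow_le_rpow_of_exponent_ge hx0 hx1.le hb
  have h4 := rpow_mul_neg_log_le hx0 hx1 hm
  have h5 : 0 ≤ x ^ b := (Real.rpow_pos_of_pos hx0 b).le
  have h6 : 0 ≤ -Real.log x := by
    have := Real.log_neg hx0 hx1; linarith
  have hab : 0 ≤ a - b := by linarith
  calc x ^ b - x ^ a = x ^ b * (1 - x ^ (a - b)) := by rw [h1]; ring
    _ ≤ x ^ b * ((a - b) * (-Real.log x)) := mul_le_mul_of_nonneg_left h2 h5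
    _ = (a - b) * (x ^ b * (-Real.log x)) := by ring
    _ ≤ (a - b) * (x ^ m * (-Real.log x)) := by
        apply mul_le_mul_of_nonneg_left _ hab
        exact mul_le_mul_of_nonneg_right h3 h6
    _ ≤ (a - b) * (1 / m) := mul_le_mul_of_nonneg_left h4 hab
    _ = (a - b) / m := by ring

lemma abs_rpow_sub_rpow_le {x m a b : ℝ} (hx0 : 0 < x) (hx1 : x < 1)
    (hm : 0 < m) (ha : m ≤ a) (hb : m ≤ b) :
    |x ^ a - x ^ b| ≤ |a - b| / m := by
  rcases le_total b a with h | h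
  · rw [abs_sub_comm, abs_of_nonneg (by
      have := Real.rpow_le_rpow_of_exponent_ge hx0 hx1.le h; linarith),
      abs_of_nonneg (by linarith)]
    exact rpow_sub_rpow_le hx0 hx1 hm hb h
  · rw [abs_of_nonneg (by
      have := Real.rpow_le_rpow_of_exponent_ge hx0 hx1.le h; linarith),
      abs_sub_comm, abs_of_nonneg (by linarith)]
    exact rpow_sub_rpow_le hx0 hx1 hm ha h

lemma abs_prod_sub_prod_le {ι : Type*} (s : Finset ι) (f g : ι → ℝ)
    (hf : ∀ i ∈ s, 0 ≤ f i ∧ f i ≤ 1) (hg : ∀ i ∈ s, 0 ≤ g i ∧ g i ≤ 1) :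
    |∏ i ∈ s, f i - ∏ i ∈ s, g i| ≤ ∑ i ∈ s, |f i - g i| := by
  classical
  induction s using Finset.induction_on with
  | empty => simp
  | insert a s hnot ih =>
    rw [Finset.prod_insert hnot, Finset.prod_insert hnot, Finset.sum_insert hnot]
    have hfa := hf a (Finset.mem_insert_self a s)
    have hga := hg a (Finset.mem_insert_self a s)
    have hf' : ∀ i ∈ s, 0 ≤ f i ∧ f i ≤ 1 := fun i hi => hf i (Finset.mem_insert_of_mem hi)
    have hg' : ∀ i ∈ s, 0 ≤ g i ∧ g i ≤ 1 := fun i hi => hg i (Finset.mem_insert_of_mem hi)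
    have ihs := ih hf' hg'
    have hgs0 : 0 ≤ ∏ i ∈ s, g i := Finset.prod_nonneg fun i hi => (hg' i hi).1
    have hgs1 : ∏ i ∈ s, g i ≤ 1 := Finset.prod_le_one (fun i hi => (hg' i hi).1)
      (fun i hi => (hg' i hi).2)
    calc |f a * ∏ i ∈ s, f i - g a * ∏ i ∈ s, g i|
        = |f a * (∏ i ∈ s, f i - ∏ i ∈ s, g i) + (f a - g a) * ∏ i ∈ s, g i| := by
          ring_nf
      _ ≤ |f a * (∏ i ∈ s, f i - ∏ i ∈ s, g i)| + |(f a - g a) * ∏ i ∈ s, g i| :=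
          abs_add_le _ _
      _ = |f a| * |∏ i ∈ s, f i - ∏ i ∈ s, g i| + |f a - g a| * |∏ i ∈ s, g i| := by
          rw [abs_mul, abs_mul]
      _ ≤ 1 * (∑ i ∈ s, |f i - g i|) + |f a - g a| * 1 := by
          apply add_le_add
          · exact mul_le_mul (by rw [abs_of_nonneg hfa.1]; exact hfa.2) ihs
              (abs_nonneg _) zero_le_one
          · exact mul_le_mul_of_nonneg_left (by rw [abs_of_nonneg hgs0]; exact hgs1)
              (abs_nonneg _)
      _ = |f a - g a| + ∑ i ∈ s, |f i - g i| := by ring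

theorem sup_diff_tendsto_zero {K : ℕ} (α : Fin K → ℝ)
    (hα : ∀ k, 0 < α k) (hsum : ∑ k, α k = 1)
    (c : ℕ → Fin K → ℝ) (hc0 : ∀ n k, 0 ≤ c n k)
    (hc : ∀ k, Tendsto (fun n : ℕ => c n k) atTop (𝓝 (α k))) :
    Tendsto
      (fun n : ℕ =>
        sSup ((fun p : Fin K → ℝ =>
            |(∏ k, (p k) ^ (c n k)) * (∏ k, (p k) ^ (α k)) ^ (-(1 / 2 : ℝ))
              - (∏ k, (p k) ^ (α k)) ^ ((1 / 2 : ℝ))|) '' openSimplex K))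
      atTop (𝓝 0) := by
  rcases Nat.eq_zero_or_pos K with hK | hK
  · exfalso; subst hK; simp at hsum
  haveI : Nonempty (Fin K) := Fin.pos_iff_nonempty.mp hK
  set m : ℝ := (Finset.univ.inf' Finset.univ_nonempty α) / 4 with hmdef
  have hinf_le : ∀ k, Finset.univ.inf' Finset.univ_nonempty α ≤ α k :=
    fun k => Finset.inf'_le α (Finset.mem_univ k)
  have hm0 : 0 < m := by
    have : 0 < Finset.univ.inf' Finset.univ_nonempty α := by
      rw [Finset.lt_inf'_iff]
      exact fun k _ => hα k
    rw [hmdef]; linarith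
  have hmle : ∀ k, 4 * m ≤ α k := fun k => by
    have := hinf_le k; rw [hmdef]; linarith
  have hev : ∀ᶠ n in atTop, ∀ k, |c n k - α k| < m := by
    rw [Filter.eventually_all]
    intro k
    have h1 : Tendsto (fun n => c n k - α k) atTop (𝓝 0) := by
      simpa using (hc k).sub_const (α k)
    have h2 := h1.abs
    simp only [abs_zero] at h2
    exact h2.eventually_lt_const hm0
  have hbound : Tendsto (fun n : ℕ => (∑ k, |c n k - α k|) / m) atTop (𝓝 0) := by
    have hs : Tendsto (fun n : ℕ => ∑ k : Fin K, |c n k - α k|) atTop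
        (𝓝 (∑ k : Fin K, (0:ℝ))) := by
      apply tendsto_finset_sum
      intro k _
      have h1 : Tendsto (fun n => c n k - α k) atTop (𝓝 0) := by
        simpa using (hc k).sub_const (α k)
      simpa using h1.abs
    simp only [Finset.sum_const_zero] at hs
    simpa using hs.div_const m
  refine squeeze_zero' ?_ ?_ hbound
  · filter_upwards with n
    apply Real.sSup_nonneg
    rintro x ⟨p, hp, rfl⟩
    exact abs_nonneg _
  · filter_upwards [hev] with n hn
    apply Real.sSup_le
    · rintro x ⟨p, hp, rfl⟩
      obtain ⟨hpmem, hpsum⟩ := hp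
      have hp0 : ∀ k, 0 < p k := fun k => (hpmem k).1
      have hp1 : ∀ k, p k < 1 := fun k => (hpmem k).2
      have ha : ∀ k, m ≤ c n k - α k / 2 := by
        intro k
        have h1 := (abs_lt.mp (hn k)).1
        have h2 := hmle k
        linarith
      have hbk : ∀ k, m ≤ α k / 2 := by
        intro k; have := hmle k; linarith
      -- rewrite the expression
      have e1 : (∏ k, (p k) ^ (α k)) ^ (-(1 / 2 : ℝ)) = ∏ k, (p k) ^ (α k * (-(1/2))) := by
        rw [← Real.finset_prod_rpow _ _ (fun k _ => Real.rpow_nonneg (hp0 k).le _)]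
        exact Finset.prod_congr rfl fun k _ => (Real.rpow_mul (hp0 k).le _ _).symm
      have e3 : (∏ k, (p k) ^ (α k)) ^ ((1 / 2 : ℝ)) = ∏ k, (p k) ^ (α k / 2) := by
        rw [← Real.finset_prod_rpow _ _ (fun k _ => Real.rpow_nonneg (hp0 k).le _)]
        refine Finset.prod_congr rfl fun k _ => ?_
        rw [← Real.rpow_mul (hp0 k).le, mul_one_div]
      have e2 : (∏ k, (p k) ^ (c n k)) * ∏ k, (p k) ^ (α k * (-(1/2)))
          = ∏ k, (p k) ^ (c n k - α k / 2) := by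
        rw [← Finset.prod_mul_distrib]
        refine Finset.prod_congr rfl fun k _ => ?_
        rw [← Real.rpow_add (hp0 k)]
        ring_nf
      dsimp only
      rw [e1, e2, e3]
      have hbnd := abs_prod_sub_prod_le Finset.univ
        (fun k => (p k) ^ (c n k - α k / 2)) (fun k => (p k) ^ (α k / 2))
        (fun k _ => ⟨Real.rpow_nonneg (hp0 k).le _,
          Real.rpow_le_one (hp0 k).le (hp1 k).le (le_trans hm0.le (ha k))⟩)
        (fun k _ => ⟨Real.rpow_nonneg (hp0 k).le _,
          Real.rpow_le_one (hp0 k).le (hp1 k).le (le_trans hm0.le (hbk k))⟩)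
      refine hbnd.trans ?_
      rw [Finset.sum_div]
      refine Finset.sum_le_sum fun k _ => ?_
      have := abs_rpow_sub_rpow_le (hp0 k) (hp1 k) hm0 (ha k) (hbk k)
      convert this using 3
      · rfl
      ring
    · positivity
end
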